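/- Let f be a non-constant entire function. Then the following are equivalent: (i) every non-constant entire function h can be written as h = g ∘ f for some non-constant entire function g (i.e., the right-shift operator R_f maps the class of non-constant entire functions onto itself); (ii) there exist a, b ∈ ℂ with a ≠ 0 such that f(w) = a·w + b for all w ∈ ℂ. -/

import Mathlib

open Set Metric Bornology Filter

/-- An entire function with an entire left inverse is affine. -/
lemma affine_of_left_inverse (f g : ℂ → ℂ) (hf : Differentiable ℂ f)
    (hg : Differentiable ℂ g) (hgf : ∀ w : ℂ, w = g (f w)) :
    ∃ a b : ℂ, a ≠ 0 ∧ ∀ w : ℂ, f w = a * w + b := by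
  -- f is injective
  have hinj : Function.Injective f := fun x y hxy => by
    rw [hgf x, hgf y, hxy]
  -- derivative of f at 0 is nonzero
  have hchain : deriv g (f 0) * deriv f 0 = 1 := by
    have h1 : (g ∘ f) = id := funext fun w => (hgf w).symm
    have := deriv_comp 0 (hg.differentiableAt) (hf.differentiableAt)
    rw [h1, deriv_id] at this
    exact this.symm
  have hd0 : deriv f 0 ≠ 0 := by
    intro h
    rw [h, mul_zero] at hchain
    exact zero_ne_one hchain
  -- properness: f z - f 0 is large for large z
  have hbig : ∀ M : ℝ, ∃ R : ℝ, 0 < R ∧ ∀ z : ℂ, R < ‖z‖ → M < ‖f z - f 0‖ := by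
    intro M
    have hK : IsCompact (g '' (closedBall (f 0) M)) :=
      (isCompact_closedBall _ _).image hg.continuous
    obtain ⟨R, hR⟩ := hK.isBounded.subset_closedBall 0
    refine ⟨|R| + 1, by positivity, fun z hz => ?_⟩
    by_contra hle
    push_neg at hle
    have hzK : z ∈ g '' (closedBall (f 0) M) :=
      ⟨f z, by simpa [mem_closedBall, dist_eq_norm] using hle, (hgf z).symm⟩
    have := hR hzK
    simp only [mem_closedBall, dist_zero_right] at this
    have : ‖z‖ ≤ |R| := le_trans this (le_abs_self R)
    linarith
  -- the extended function ψ at infinity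
  set ψ : ℂ → ℂ := fun w => if w = 0 then 0 else (f w⁻¹ - f 0)⁻¹ with hψ
  have hne : ∀ z : ℂ, z ≠ 0 → f z - f 0 ≠ 0 := fun z hz h => by
    have : f z = f 0 := by linear_combination h
    exact hz (hinj this)
  have hψd : ∀ w : ℂ, w ≠ 0 → DifferentiableAt ℂ ψ w := by
    intro w hw
    have hev : ψ =ᶠ[nhds w] fun v => (f v⁻¹ - f 0)⁻¹ := by
      filter_upwards [isOpen_ne.mem_nhds (by exact hw : w ≠ (0:ℂ))] with v hv
      simp [hψ, hv]
    refine (Filter.EventuallyEq.differentiableAt_iff hev).mpr ?_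
    exact (((hf.differentiableAt).comp w (differentiableAt_inv hw)).sub_const (f 0)).inv
      (hne _ (inv_ne_zero hw))
  -- ψ is continuous at 0 via properness
  have hψc : ContinuousAt ψ 0 := by
    rw [ContinuousAt]
    have : ψ 0 = 0 := by simp [hψ]
    rw [this]
    rw [NormedAddCommGroup.tendsto_nhds_zero]
    intro ε hε
    obtain ⟨R, hR0, hR⟩ := hbig (1 / ε)
    have : ∀ w : ℂ, ‖w‖ < R⁻¹ → ‖ψ w‖ < ε := by
      intro w hw
      rcases eq_or_ne w 0 with rfl | hw0
      · simpa [hψ] using hε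
      · have h1 : R < ‖w⁻¹‖ := by
          rw [norm_inv]
          exact (lt_inv_comm₀ hR0 (norm_pos_iff.mpr hw0)).mpr hw
        have h2 := hR _ h1
        have hpos : (0:ℝ) < ‖f w⁻¹ - f 0‖ := lt_trans (by positivity) h2
        simp only [hψ, if_neg hw0, norm_inv]
        rw [inv_lt_comm₀ hpos hε]
        calc ε⁻¹ = 1 / ε := (one_div ε).symm
        _ < ‖f w⁻¹ - f 0‖ := h2
    rw [Metric.eventually_nhds_iff]
    exact ⟨R⁻¹, by positivity, fun {w} hw => this w (by simpa [dist_eq_norm] using hw)⟩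
  -- removable singularity: ψ differentiable at 0
  have hψd0 : DifferentiableAt ℂ ψ 0 := by
    have hd : ∀ᶠ z in nhdsWithin 0 {(0:ℂ)}ᶜ, DifferentiableAt ℂ ψ z := by
      filter_upwards [self_mem_nhdsWithin] with z hz
      exact hψd z hz
    exact (Complex.analyticAt_of_differentiable_on_punctured_nhds_of_continuousAt
      hd hψc).differentiableAt
  -- ψ w = O(w) near 0
  have hO : ∃ C : ℝ, 0 < C ∧ ∃ δ : ℝ, 0 < δ ∧ ∀ w : ℂ, ‖w‖ < δ → ‖ψ w‖ ≤ C * ‖w‖ := by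
    have := hψd0.isBigO_sub
    obtain ⟨C, hC⟩ := this.bound
    rw [Metric.eventually_nhds_iff] at hC
    obtain ⟨δ, hδ, hCδ⟩ := hC
    refine ⟨max C 1, lt_of_lt_of_le one_pos (le_max_right _ _), δ, hδ, fun w hw => ?_⟩
    have := hCδ (y := w) (by simpa [dist_eq_norm] using hw)
    simp only [hψ, if_pos rfl, sub_zero] at this
    calc ‖ψ w‖ ≤ C * ‖w‖ := by simpa [hψ] using this
    _ ≤ max C 1 * ‖w‖ := by
        apply mul_le_mul_of_nonneg_right (le_max_left _ _) (norm_nonneg _)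
  obtain ⟨C, hC0, δ, hδ0, hCb⟩ := hO
  -- the function q = (dslope f 0)⁻¹ is entire and bounded
  set F : ℂ → ℂ := dslope f 0 with hF
  have hFd : Differentiable ℂ F := by
    have : DifferentiableOn ℂ F univ :=
      (Complex.differentiableOn_dslope (by simp : (univ : Set ℂ) ∈ nhds (0:ℂ))).mpr
        hf.differentiableOn
    exact fun z => (this z (mem_univ z)).differentiableAt (by simp)
  have hFne : ∀ z : ℂ, F z ≠ 0 := by
    intro z
    rcases eq_or_ne z 0 with rfl | hz
    · simpa [hF, dslope_same] using hd0
    · rw [hF, dslope_of_ne f hz, slope_def_field]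
      exact div_ne_zero (hne z hz) (by simpa using hz)
  set q : ℂ → ℂ := fun z => (F z)⁻¹ with hq
  have hqd : Differentiable ℂ q := hFd.inv hFne
  -- q is bounded for large z
  have hqlarge : ∀ z : ℂ, δ⁻¹ < ‖z‖ → ‖q z‖ ≤ C := by
    intro z hz
    have hz0 : z ≠ 0 := by
      intro h
      rw [h] at hz
      simp at hz
      have : (0:ℝ) < δ⁻¹ := by positivity
      linarith
    have hzinv : ‖z⁻¹‖ < δ := by
      rw [norm_inv, inv_lt_comm₀ (norm_pos_iff.mpr hz0) hδ0]
      exact hz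
    have hb := hCb z⁻¹ hzinv
    have hval : ψ z⁻¹ = (f z - f 0)⁻¹ := by
      simp [hψ, inv_ne_zero hz0, inv_inv]
    have hqval : q z = z * (f z - f 0)⁻¹ := by
      show (dslope f 0 z)⁻¹ = z * (f z - f 0)⁻¹
      rw [dslope_of_ne f hz0, slope_def_field, sub_zero, inv_div, div_eq_mul_inv]
    rw [hqval]
    rw [hval] at hb
    calc ‖z * (f z - f 0)⁻¹‖ = ‖z‖ * ‖(f z - f 0)⁻¹‖ := norm_mul _ _
    _ ≤ ‖z‖ * (C * ‖z⁻¹‖) := by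
        apply mul_le_mul_of_nonneg_left hb (norm_nonneg _)
    _ = C * (‖z‖ * ‖z‖⁻¹) := by rw [norm_inv]; ring
    _ = C := by rw [mul_inv_cancel₀ (norm_ne_zero_iff.mpr hz0), mul_one]
  -- q is bounded on the closed ball
  obtain ⟨B, hB⟩ := (isCompact_closedBall (0:ℂ) (δ⁻¹ + 1)).exists_bound_of_continuousOn
    hqd.continuous.continuousOn
  have hqbdd : IsBounded (range q) := by
    rw [isBounded_iff_forall_norm_le]
    refine ⟨max C B, ?_⟩
    rintro x ⟨z, rfl⟩
    rcases le_or_gt ‖z‖ δ⁻¹ with hle | hlt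
    · refine le_trans (hB z ?_) (le_max_right _ _)
      simp only [mem_closedBall, dist_zero_right]
      linarith
    · exact le_trans (hqlarge z hlt) (le_max_left _ _)
  -- Liouville: q is constant
  obtain ⟨c, hc⟩ := hqd.exists_const_forall_eq_of_bounded hqbdd
  have hcne : c ≠ 0 := by
    intro h
    have := hc 0
    rw [h] at this
    exact hFne 0 (inv_eq_zero.mp this)
  -- conclude: F is constant c⁻¹, so f is affine
  refine ⟨c⁻¹, f 0, inv_ne_zero hcne, fun w => ?_⟩
  rcases eq_or_ne w 0 with rfl | hw
  · simp
  · have hFw : F w = c⁻¹ := by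
      rw [← hc w, hq]
      exact (inv_inv _).symm
    rw [hF, dslope_of_ne f hw, slope_def_field, sub_zero] at hFw
    have := (div_eq_iff hw).mp hFw
    linear_combination this

/-- For a non-constant entire function `f`, the right-shift operator
`R_f` maps the class of non-constant entire functions *onto* itself (i.e. every
non-constant entire `h` factors as `h = g ∘ f` with `g` non-constant entire) if and only
if `f` is affine: `f(w) = a·w + b` with `a ≠ 0`. -/
theorem rightShift_surjective_iff_affine (f : ℂ → ℂ) (hf : Differentiable ℂ f)
    (hnc : ¬∃ c : ℂ, ∀ w : ℂ, f w = c) :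
    (∀ h : ℂ → ℂ, Differentiable ℂ h → (¬∃ c : ℂ, ∀ w : ℂ, h w = c) →
      ∃ g : ℂ → ℂ, Differentiable ℂ g ∧ (¬∃ c : ℂ, ∀ w : ℂ, g w = c) ∧
        ∀ w : ℂ, h w = g (f w)) ↔
    (∃ a b : ℂ, a ≠ 0 ∧ ∀ w : ℂ, f w = a * w + b) := by
  constructor
  · intro H
    obtain ⟨g, hg, _, hgf⟩ := H id differentiable_id
      (by rintro ⟨c, hc⟩; have h0 := hc 0; have h1 := hc 1; simp [id] at h0 h1; rw [← h0] at h1; exact zero_ne_one h1.symm)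
    exact affine_of_left_inverse f g hf hg hgf
  · rintro ⟨a, b, ha, hab⟩ h hh hhnc
    refine ⟨fun z => h ((z - b) / a), ?_, ?_, fun w => ?_⟩
    · exact hh.comp ((differentiable_id.sub_const b).div_const a)
    · rintro ⟨c, hc⟩
      apply hhnc
      refine ⟨c, fun w => ?_⟩
      have := hc (a * w + b)
      simpa [ha] using this
    · rw [hab w]
      congr 1
      field_simp
      ring
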